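/- arXiv:1810.08292 — 6 statements merged into one kernel-verified Lean document; each statement's English description precedes it below -/
import Mathlib

section
/- Let W and Ŵ be symmetric d×d real matrices with nonnegative entries whose respective row sums Dᵢ = Σⱼ Wᵢⱼ and D̂ᵢ = Σⱼ Ŵᵢⱼ are all positive. Let L = I − D^{-1/2} W D^{-1/2} and L̂ = I − D̂^{-1/2} Ŵ D̂^{-1/2} be the corresponding normalized graph Laplacians, and set m = maxᵢ |Dᵢ − D̂ᵢ| / minᵢ Dᵢ. Then ‖L̂ − L‖_op ≤ m·(2 + m) + ‖Ŵ − W‖_op / minᵢ Dᵢ. -/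
open Matrix

/-- Degree (row sum) of a weight matrix. -/
noncomputable def deg {d : ℕ} (W : Matrix (Fin d) (Fin d) ℝ) (i : Fin d) : ℝ :=
  ∑ j, W i j

/-- The diagonal matrix `D^{-1/2}` with entries `1/√Dᵢ`. -/
noncomputable def invSqrtDeg {d : ℕ} (W : Matrix (Fin d) (Fin d) ℝ) :
    Matrix (Fin d) (Fin d) ℝ :=
  Matrix.diagonal fun i => (Real.sqrt (deg W i))⁻¹

/-- The normalized graph Laplacian `L = I − D^{-1/2} W D^{-1/2}`. -/
noncomputable def normLap {d : ℕ} (W : Matrix (Fin d) (Fin d) ℝ) :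
    Matrix (Fin d) (Fin d) ℝ :=
  1 - invSqrtDeg W * W * invSqrtDeg W

/-- Spectral (operator) norm of a real matrix. -/
noncomputable def opNorm {m n : ℕ} (M : Matrix (Fin m) (Fin n) ℝ) : ℝ :=
  ‖LinearMap.toContinuousLinearMap (Matrix.toEuclideanLin M)‖

section Helpers

open scoped Matrix.Norms.L2Operator

variable {d : ℕ}

lemma opNorm_eq_l2norm (M : Matrix (Fin d) (Fin d) ℝ) : opNorm M = ‖M‖ := rfl

lemma l2norm_le_of_bound {c : ℝ} (hc : 0 ≤ c) (M : Matrix (Fin d) (Fin d) ℝ)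
    (h : ∀ x : Fin d → ℝ, ∑ i, (M *ᵥ x) i ^ 2 ≤ c ^ 2 * ∑ i, x i ^ 2) :
    ‖M‖ ≤ c := by
  rw [Matrix.l2_opNorm_def]
  refine ContinuousLinearMap.opNorm_le_bound _ hc fun x => ?_
  have happ : ((Matrix.toEuclideanLin.trans LinearMap.toContinuousLinearMap) M) x
      = (WithLp.equiv 2 (Fin d → ℝ)).symm (M *ᵥ (WithLp.equiv 2 (Fin d → ℝ) x)) := by
    simp [Matrix.toEuclideanLin_apply]
  rw [happ, EuclideanSpace.norm_eq, EuclideanSpace.norm_eq]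
  simp only [WithLp.equiv_symm_apply, PiLp.toLp_apply, Real.norm_eq_abs, sq_abs]
  calc Real.sqrt (∑ i, (M *ᵥ (WithLp.equiv 2 (Fin d → ℝ) x)) i ^ 2)
      ≤ Real.sqrt (c ^ 2 * ∑ i, (WithLp.equiv 2 (Fin d → ℝ) x) i ^ 2) :=
        Real.sqrt_le_sqrt (h _)
    _ = c * Real.sqrt (∑ i, (WithLp.equiv 2 (Fin d → ℝ) x) i ^ 2) := by
        rw [Real.sqrt_mul (sq_nonneg c), Real.sqrt_sq hc]
    _ = c * Real.sqrt (∑ i, x i ^ 2) := rfl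

lemma l2norm_diagonal_le {c : ℝ} (hc : 0 ≤ c) (v : Fin d → ℝ) (h : ∀ i, |v i| ≤ c) :
    ‖(Matrix.diagonal v : Matrix (Fin d) (Fin d) ℝ)‖ ≤ c := by
  refine l2norm_le_of_bound hc _ fun x => ?_
  rw [Finset.mul_sum]
  refine Finset.sum_le_sum fun i _ => ?_
  rw [Matrix.mulVec_diagonal, mul_pow]
  have h2 : v i ^ 2 ≤ c ^ 2 := by
    rw [← sq_abs]
    exact pow_le_pow_left₀ (abs_nonneg _) (h i) 2
  exact mul_le_mul_of_nonneg_right h2 (sq_nonneg _)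

lemma l2norm_normAdj_le (W : Matrix (Fin d) (Fin d) ℝ) (hWsymm : W.IsSymm)
    (hW : ∀ i j, 0 ≤ W i j) (hdW : ∀ i, 0 < deg W i) :
    ‖invSqrtDeg W * W * invSqrtDeg W‖ ≤ 1 := by
  refine l2norm_le_of_bound zero_le_one _ fun x => ?_
  rw [one_pow, one_mul]
  have hentry : ∀ i j, (invSqrtDeg W * W * invSqrtDeg W) i j
      = (Real.sqrt (deg W i))⁻¹ * W i j * (Real.sqrt (deg W j))⁻¹ := by
    intro i j
    simp [invSqrtDeg, Matrix.mul_diagonal, Matrix.diagonal_mul]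
  have hrow : ∀ i, ((invSqrtDeg W * W * invSqrtDeg W) *ᵥ x) i ^ 2
      ≤ ∑ j, W i j * (x j ^ 2 / deg W j) := by
    intro i
    have hmv : ((invSqrtDeg W * W * invSqrtDeg W) *ᵥ x) i
        = ∑ j, (Real.sqrt (deg W i))⁻¹ * W i j * (Real.sqrt (deg W j))⁻¹ * x j := by
      simp only [Matrix.mulVec, dotProduct, hentry]
    rw [hmv]
    have hcs := Finset.sum_sq_le_sum_mul_sum_of_sq_eq_mul (Finset.univ : Finset (Fin d))
      (r := fun j => (Real.sqrt (deg W i))⁻¹ * W i j * (Real.sqrt (deg W j))⁻¹ * x j)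
      (f := fun j => W i j / deg W i)
      (g := fun j => W i j * (x j ^ 2 / deg W j))
      (fun j _ => div_nonneg (hW i j) (hdW i).le)
      (fun j _ => mul_nonneg (hW i j) (div_nonneg (sq_nonneg _) (hdW j).le))
      (fun j _ => by
        have h1 : Real.sqrt (deg W i) ^ 2 = deg W i := Real.sq_sqrt (hdW i).le
        have h2 : Real.sqrt (deg W j) ^ 2 = deg W j := Real.sq_sqrt (hdW j).le
        have e1 : ((Real.sqrt (deg W i))⁻¹ * W i j * (Real.sqrt (deg W j))⁻¹ * x j) ^ 2
            = (Real.sqrt (deg W i) ^ 2)⁻¹ * (Real.sqrt (deg W j) ^ 2)⁻¹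
              * W i j ^ 2 * x j ^ 2 := by ring
        rw [e1, h1, h2]
        ring)
    have hsumf : ∑ j, W i j / deg W i = 1 := by
      rw [← Finset.sum_div]
      exact div_self (hdW i).ne'
    calc (∑ j, (Real.sqrt (deg W i))⁻¹ * W i j * (Real.sqrt (deg W j))⁻¹ * x j) ^ 2
        ≤ (∑ j, W i j / deg W i) * ∑ j, W i j * (x j ^ 2 / deg W j) := hcs
      _ = ∑ j, W i j * (x j ^ 2 / deg W j) := by rw [hsumf, one_mul]
  calc ∑ i, ((invSqrtDeg W * W * invSqrtDeg W) *ᵥ x) i ^ 2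
      ≤ ∑ i, ∑ j, W i j * (x j ^ 2 / deg W j) := Finset.sum_le_sum fun i _ => hrow i
    _ = ∑ j, ∑ i, W i j * (x j ^ 2 / deg W j) := Finset.sum_comm
    _ = ∑ j, x j ^ 2 := by
        refine Finset.sum_congr rfl fun j _ => ?_
        rw [← Finset.sum_mul]
        have hcol : ∑ i, W i j = deg W j := by
          rw [deg]
          exact Finset.sum_congr rfl fun i _ => hWsymm.apply j i
        rw [hcol, mul_comm, div_mul_cancel₀ _ (hdW j).ne']

end Helpers

open scoped Matrix.Norms.L2Operator in
/-- Deterministic perturbation bound for normalized graph Laplacians: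
with `m = maxᵢ |Dᵢ − D̂ᵢ| / minᵢ Dᵢ`, one has
`‖L̂ − L‖_op ≤ m(2 + m) + ‖Ŵ − W‖_op / minᵢ Dᵢ`. -/
theorem stmt4 {d : ℕ} (hd : 0 < d) (W Wh : Matrix (Fin d) (Fin d) ℝ)
    (hWsymm : W.IsSymm) (hWhsymm : Wh.IsSymm)
    (hW : ∀ i j, 0 ≤ W i j) (hWh : ∀ i j, 0 ≤ Wh i j)
    (hdW : ∀ i, 0 < deg W i) (hdWh : ∀ i, 0 < deg Wh i) :
    opNorm (normLap Wh - normLap W) ≤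
      ((⨆ i, |deg W i - deg Wh i|) / (⨅ i, deg W i)) *
        (2 + (⨆ i, |deg W i - deg Wh i|) / (⨅ i, deg W i)) +
      opNorm (Wh - W) / (⨅ i, deg W i) := by
  haveI : Nonempty (Fin d) := ⟨⟨0, hd⟩⟩
  set δ : ℝ := ⨅ i, deg W i with hδdef
  set Mx : ℝ := ⨆ i, |deg W i - deg Wh i| with hMdef
  set m : ℝ := Mx / δ with hmdef
  have hδle : ∀ i, δ ≤ deg W i := fun i =>
    ciInf_le (Set.finite_range _).bddBelow i
  have hMge : ∀ i, |deg W i - deg Wh i| ≤ Mx := fun i => by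
    rw [hMdef]
    exact le_ciSup (Set.finite_range fun i => |deg W i - deg Wh i|).bddAbove i
  have hδpos : 0 < δ := by
    obtain ⟨i0, hi0⟩ := Finite.exists_min (deg W)
    exact lt_of_lt_of_le (hdW i0) (le_ciInf hi0)
  have hM0 : 0 ≤ Mx := le_trans (abs_nonneg _) (hMge (Classical.arbitrary _))
  have hm0 : 0 ≤ m := div_nonneg hM0 hδpos.le
  set S := invSqrtDeg W with hSdef
  set Sh := invSqrtDeg Wh with hShdef
  set Ah := Sh * Wh * Sh with hAhdef
  set G : Matrix (Fin d) (Fin d) ℝ :=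
    Matrix.diagonal (fun i => Real.sqrt (deg Wh i) * (Real.sqrt (deg W i))⁻¹) with hGdef
  -- key diagonal conjugation identity
  have hGS : G * Sh = S := by
    rw [hGdef, hShdef, invSqrtDeg, Matrix.diagonal_mul_diagonal, hSdef, invSqrtDeg]
    exact congrArg Matrix.diagonal (funext fun i => by
      have hb : Real.sqrt (deg Wh i) ≠ 0 := (Real.sqrt_pos.mpr (hdWh i)).ne'
      show Real.sqrt (deg Wh i) * (Real.sqrt (deg W i))⁻¹ * (Real.sqrt (deg Wh i))⁻¹
          = (Real.sqrt (deg W i))⁻¹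
      rw [mul_right_comm, mul_inv_cancel₀ hb, one_mul])
  have hSG : Sh * G = S := by
    rw [hGdef, hShdef, invSqrtDeg, Matrix.diagonal_mul_diagonal, hSdef, invSqrtDeg]
    exact congrArg Matrix.diagonal (funext fun i => by
      have hb : Real.sqrt (deg Wh i) ≠ 0 := (Real.sqrt_pos.mpr (hdWh i)).ne'
      show (Real.sqrt (deg Wh i))⁻¹ * (Real.sqrt (deg Wh i) * (Real.sqrt (deg W i))⁻¹)
          = (Real.sqrt (deg W i))⁻¹
      rw [← mul_assoc, inv_mul_cancel₀ hb, one_mul])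
  have hGAG : G * Ah * G = S * Wh * S := by
    calc G * Ah * G = (G * Sh) * Wh * (Sh * G) := by
          rw [hAhdef]
          simp only [Matrix.mul_assoc]
      _ = S * Wh * S := by rw [hGS, hSG]
  have hsplit : normLap Wh - normLap W
      = S * (W - Wh) * S + ((G - 1) * (Ah * G) + Ah * (G - 1)) := by
    have h2 : (G - 1) * (Ah * G) + Ah * (G - 1) = G * Ah * G - Ah := by noncomm_ring
    rw [h2, hGAG]
    simp only [normLap, ← hSdef, ← hShdef, ← hAhdef]
    noncomm_ring
  -- per-entry bound for the diagonal of G - 1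
  have hgi : ∀ i, |Real.sqrt (deg Wh i) * (Real.sqrt (deg W i))⁻¹ - 1| ≤ m := by
    intro i
    set a := deg W i with ha
    set b := deg Wh i with hb
    have ha0 : 0 < a := hdW i
    have hb0 : 0 < b := hdWh i
    have hsqrt : Real.sqrt b * (Real.sqrt a)⁻¹ = Real.sqrt (b / a) := by
      rw [Real.sqrt_div hb0.le, div_eq_mul_inv]
    rw [hsqrt]
    set u := b / a with hu
    have hu0 : 0 ≤ u := div_nonneg hb0.le ha0.le
    have hstep : |Real.sqrt u - 1| ≤ |u - 1| := by
      have h1 : (Real.sqrt u - 1) * (Real.sqrt u + 1) = u - 1 := by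
        have := Real.sq_sqrt hu0
        nlinarith
      have hpos1 : (0:ℝ) ≤ Real.sqrt u + 1 := by positivity
      calc |Real.sqrt u - 1| ≤ |Real.sqrt u - 1| * (Real.sqrt u + 1) := by
            refine le_mul_of_one_le_right (abs_nonneg _) ?_
            have := Real.sqrt_nonneg u
            linarith
        _ = |(Real.sqrt u - 1) * (Real.sqrt u + 1)| := by
            rw [abs_mul, abs_of_nonneg hpos1]
        _ = |u - 1| := by rw [h1]
    have hfrac : |u - 1| = |b - a| / a := by
      rw [hu]
      rw [show b / a - 1 = (b - a) / a by field_simp]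
      rw [abs_div, abs_of_pos ha0]
    have hnum : |b - a| ≤ Mx := by
      rw [abs_sub_comm]
      exact hMge i
    calc |Real.sqrt u - 1| ≤ |u - 1| := hstep
      _ = |b - a| / a := hfrac
      _ ≤ Mx / δ := div_le_div₀ hM0 hnum hδpos (hδle i)
  have ht : ‖G - 1‖ ≤ m := by
    have hdiag : G - 1 = Matrix.diagonal
        (fun i => Real.sqrt (deg Wh i) * (Real.sqrt (deg W i))⁻¹ - 1) := by
      rw [hGdef, ← Matrix.diagonal_one, Matrix.diagonal_sub]
    rw [hdiag]
    exact l2norm_diagonal_le hm0 _ hgi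
  have hG : ‖G‖ ≤ 1 + m := by
    rw [hGdef]
    refine l2norm_diagonal_le (by linarith) _ fun i => ?_
    have hpos : 0 ≤ Real.sqrt (deg Wh i) * (Real.sqrt (deg W i))⁻¹ := by positivity
    have := abs_le.mp (hgi i)
    rw [abs_of_nonneg hpos]
    linarith [this.2]
  have hAh : ‖Ah‖ ≤ 1 := l2norm_normAdj_le Wh hWhsymm hWh hdWh
  set s : ℝ := (Real.sqrt δ)⁻¹ with hsdef
  have hs0 : 0 ≤ s := by positivity
  have hS : ‖S‖ ≤ s := by
    rw [hSdef, invSqrtDeg]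
    refine l2norm_diagonal_le hs0 _ fun i => ?_
    rw [abs_of_nonneg (by positivity)]
    exact inv_anti₀ (Real.sqrt_pos.mpr hδpos) (Real.sqrt_le_sqrt (hδle i))
  have hss : s * s = δ⁻¹ := by
    rw [hsdef, ← mul_inv, Real.mul_self_sqrt hδpos.le]
  -- assemble
  have b1 : ‖S * (W - Wh) * S‖ ≤ ‖S‖ * ‖W - Wh‖ * ‖S‖ :=
    le_trans (Matrix.l2_opNorm_mul _ _)
      (mul_le_mul_of_nonneg_right (Matrix.l2_opNorm_mul _ _) (norm_nonneg _))
  have b2 : ‖(G - 1) * (Ah * G)‖ ≤ ‖G - 1‖ * (‖Ah‖ * ‖G‖) :=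
    le_trans (Matrix.l2_opNorm_mul _ _)
      (mul_le_mul_of_nonneg_left (Matrix.l2_opNorm_mul _ _) (norm_nonneg _))
  have b3 : ‖Ah * (G - 1)‖ ≤ ‖Ah‖ * ‖G - 1‖ := Matrix.l2_opNorm_mul _ _
  rw [opNorm_eq_l2norm, opNorm_eq_l2norm]
  calc ‖normLap Wh - normLap W‖
      = ‖S * (W - Wh) * S + ((G - 1) * (Ah * G) + Ah * (G - 1))‖ := by rw [hsplit]
    _ ≤ ‖S * (W - Wh) * S‖ + (‖(G - 1) * (Ah * G)‖ + ‖Ah * (G - 1)‖) :=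
        le_trans (norm_add_le _ _) (add_le_add le_rfl (norm_add_le _ _))
    _ ≤ ‖S‖ * ‖W - Wh‖ * ‖S‖ + (‖G - 1‖ * (‖Ah‖ * ‖G‖) + ‖Ah‖ * ‖G - 1‖) := by
        exact add_le_add b1 (add_le_add b2 b3)
    _ ≤ s * ‖W - Wh‖ * s + (m * (1 * (1 + m)) + 1 * m) := by
        have c1 : ‖S‖ * ‖W - Wh‖ * ‖S‖ ≤ s * ‖W - Wh‖ * s := by
          apply mul_le_mul (mul_le_mul hS le_rfl (norm_nonneg _) hs0) hS (norm_nonneg _)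
          positivity
        have c2 : ‖G - 1‖ * (‖Ah‖ * ‖G‖) ≤ m * (1 * (1 + m)) := by
          apply mul_le_mul ht (mul_le_mul hAh hG (norm_nonneg _) zero_le_one)
            (by positivity) hm0
        have c3 : ‖Ah‖ * ‖G - 1‖ ≤ 1 * m :=
          mul_le_mul hAh ht (norm_nonneg _) zero_le_one
        exact add_le_add c1 (add_le_add c2 c3)
    _ = m * (2 + m) + ‖Wh - W‖ / δ := by
        rw [norm_sub_rev W Wh, div_eq_mul_inv, ← hss]
        ring
end

section
/- Let Q, Q̂ ∈ ℝ^{d×k} be matrices with orthonormal columns (Qᵀ Q = I_k and Q̂ᵀ Q̂ = I_k). Then there exists an orthogonal matrix O ∈ ℝ^{k×k} such that ‖Q̂ − Q O‖_F² ≤ 2·(k − ‖Qᵀ Q̂‖_F²). -/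
open Matrix

variable {k : ℕ}

private lemma inner_equiv (x y : Fin k → ℝ) :
    (inner ℝ ((WithLp.equiv 2 (Fin k → ℝ)).symm x) ((WithLp.equiv 2 (Fin k → ℝ)).symm y) : ℝ)
      = x ⬝ᵥ y := by
  simp [PiLp.inner_apply, RCLike.inner_apply, dotProduct, WithLp.equiv_symm_apply, PiLp.toLp_apply, mul_comm]

private lemma dot_mulVec_mulVec (A : Matrix (Fin k) (Fin k) ℝ) (x y : Fin k → ℝ) :
    (A *ᵥ x) ⬝ᵥ (A *ᵥ y) = x ⬝ᵥ ((Aᵀ * A) *ᵥ y) := by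
  rw [← mulVec_mulVec, ← vecMul_transpose, ← dotProduct_mulVec]

lemma key (A : Matrix (Fin k) (Fin k) ℝ) (hP : PosSemidef (1 - Aᵀ * A)) :
    ∃ O : Matrix (Fin k) (Fin k) ℝ, Oᵀ * O = 1 ∧ O * Oᵀ = 1 ∧
      trace (Aᵀ * A) ≤ trace (Aᵀ * O) := by
  classical
  have hAA : PosSemidef (Aᵀ * A) := by simpa using posSemidef_conjTranspose_mul_self A
  have hH : (Aᵀ * A).IsHermitian := hAA.1
  set μ : Fin k → ℝ := hH.eigenvalues with hμdef
  set u : Fin k → (Fin k → ℝ) := fun j => ⇑(hH.eigenvectorBasis j) with hudef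
  have heig : ∀ j, (Aᵀ * A) *ᵥ u j = μ j • u j := fun j => hH.mulVec_eigenvectorBasis j
  have hdot : ∀ i j, u i ⬝ᵥ u j = if i = j then 1 else 0 := by
    intro i j
    have := (orthonormal_iff_ite.mp hH.eigenvectorBasis.orthonormal) i j
    simpa [PiLp.inner_apply, RCLike.inner_apply, dotProduct, mul_comm] using this
  have hμ0 : ∀ j, 0 ≤ μ j := hAA.eigenvalues_nonneg
  have hμ1 : ∀ j, μ j ≤ 1 := by
    intro j
    have h := hP.dotProduct_mulVec_nonneg (u j)
    have hs : star (u j) = u j := by simp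
    rw [hs, sub_mulVec, one_mulVec, dotProduct_sub, heig j, dotProduct_smul] at h
    have huu : u j ⬝ᵥ u j = 1 := by simpa using hdot j j
    rw [huu] at h
    simp only [smul_eq_mul, huu, mul_one] at h
    linarith
  have hAdot : ∀ i j, (A *ᵥ u i) ⬝ᵥ (A *ᵥ u j) = μ j * (if i = j then 1 else 0) := by
    intro i j
    rw [dot_mulVec_mulVec, heig j, dotProduct_smul, smul_eq_mul, hdot]
  have hA0 : ∀ j, μ j = 0 → A *ᵥ u j = 0 := by
    intro j hj
    have : (A *ᵥ u j) ⬝ᵥ (A *ᵥ u j) = 0 := by simp [hAdot j j, hj]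
    exact dotProduct_self_eq_zero.mp this
  set s : Set (Fin k) := {j | μ j ≠ 0} with hsdef
  set w : Fin k → EuclideanSpace ℝ (Fin k) :=
    fun j => (Real.sqrt (μ j))⁻¹ • ((WithLp.equiv 2 (Fin k → ℝ)).symm (A *ᵥ u j)) with hwdef
  have hsq : ∀ j ∈ s, Real.sqrt (μ j) * Real.sqrt (μ j) = μ j := by
    intro j hj
    exact Real.mul_self_sqrt (hμ0 j)
  have hsqrtpos : ∀ j ∈ s, 0 < Real.sqrt (μ j) :=
    fun j hj => Real.sqrt_pos.mpr (lt_of_le_of_ne (hμ0 j) (Ne.symm hj))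
  have hwinner : ∀ i j, (inner ℝ (w i) (w j) : ℝ)
      = (Real.sqrt (μ i))⁻¹ * ((Real.sqrt (μ j))⁻¹ * (μ j * if i = j then 1 else 0)) := by
    intro i j
    rw [hwdef]
    simp only [real_inner_smul_left, real_inner_smul_right, inner_equiv, hAdot]
    ring
  have hwon : Orthonormal ℝ (s.restrict w) := by
    rw [orthonormal_iff_ite]
    rintro ⟨i, hi⟩ ⟨j, hj⟩
    simp only [Set.restrict, Set.restrict_apply, hwinner i j, Subtype.mk.injEq]
    by_cases hij : i = j
    · subst hij
      have h0 : Real.sqrt (μ i) ≠ 0 := (hsqrtpos i hi).ne'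
      simp only [if_pos rfl, mul_one]
      rw [← hsq i hi]
      field_simp
      rw [Real.sqrt_sq (Real.sqrt_nonneg _)]
    · simp [hij]
  obtain ⟨b, hb⟩ := hwon.exists_orthonormalBasis_extension_of_card_eq
    (by simp [finrank_euclideanSpace])
  set U : Matrix (Fin k) (Fin k) ℝ := (hH.eigenvectorUnitary : Matrix (Fin k) (Fin k) ℝ)
    with hUdef
  have hU1 : Uᵀ * U = 1 := by
    have := Matrix.mem_unitaryGroup_iff'.mp hH.eigenvectorUnitary.2
    simpa [hUdef, star_eq_conjTranspose, conjTranspose_eq_transpose_of_trivial] using this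
  have hU2 : U * Uᵀ = 1 := by
    have := Matrix.mem_unitaryGroup_iff.mp hH.eigenvectorUnitary.2
    simpa [hUdef, star_eq_conjTranspose, conjTranspose_eq_transpose_of_trivial] using this
  set W : Matrix (Fin k) (Fin k) ℝ := Matrix.of (fun i j => b j i) with hWdef
  have hW1 : Wᵀ * W = 1 := by
    ext i j
    have := (orthonormal_iff_ite.mp b.orthonormal) i j
    simp only [PiLp.inner_apply, RCLike.inner_apply, starRingEnd_apply, star_trivial] at this
    simp only [Matrix.mul_apply, hWdef, transpose_apply, Matrix.of_apply, Matrix.one_apply]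
    simpa [mul_comm] using this
  set D : Matrix (Fin k) (Fin k) ℝ := diagonal (fun j => Real.sqrt (μ j)) with hDdef
  have hkey : A * U = W * D := by
    ext i j
    have hUapp : ∀ l, U l j = u j l := fun l => rfl
    have hlhs : (A * U) i j = (A *ᵥ u j) i := by
      simp [Matrix.mul_apply, mulVec, dotProduct, hUapp]
    rw [hlhs, hDdef, mul_diagonal]
    by_cases hj : μ j = 0
    · simp [hA0 j hj, hj]
    · have hjs : j ∈ s := hj
      have : W i j = (Real.sqrt (μ j))⁻¹ * (A *ᵥ u j) i := by
        simp only [hWdef, Matrix.of_apply, hb j hjs, hwdef]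
        rfl
      rw [this]
      have h0 : Real.sqrt (μ j) ≠ 0 := (hsqrtpos j hjs).ne'
      field_simp
  have htrA : trace (Aᵀ * A) = ∑ j, μ j := by
    calc trace (Aᵀ * A)
        = trace (U * diagonal (RCLike.ofReal ∘ μ) * star U) := by rw [hH.spectral_theorem, Unitary.conjStarAlgAut_apply]
      _ = trace (star U * U * diagonal (RCLike.ofReal ∘ μ)) := by
          rw [trace_mul_comm, mul_assoc]
      _ = ∑ j, μ j := by
          rw [Unitary.coe_star_mul_self]  -- might fail; fallback below
          simp [trace_diagonal]
  have htrO : trace (Aᵀ * (W * Uᵀ)) = ∑ j, Real.sqrt (μ j) := by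
    calc trace (Aᵀ * (W * Uᵀ))
        = trace (Uᵀ * (Aᵀ * W)) := by rw [← mul_assoc, trace_mul_comm]
      _ = trace ((A * U)ᵀ * W) := by rw [transpose_mul, mul_assoc]
      _ = trace ((W * D)ᵀ * W) := by rw [hkey]
      _ = trace (D * (Wᵀ * W)) := by
          rw [transpose_mul, diagonal_transpose, mul_assoc]
      _ = ∑ j, Real.sqrt (μ j) := by rw [hW1, mul_one, hDdef, trace_diagonal]
  refine ⟨W * Uᵀ, ?_, ?_, ?_⟩
  · rw [transpose_mul, transpose_transpose, mul_assoc, ← mul_assoc Wᵀ, hW1, one_mul, hU2]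
  · rw [transpose_mul, transpose_transpose, mul_assoc, ← mul_assoc Uᵀ, hU1, one_mul,
      mul_eq_one_comm.mp hW1]
  · rw [htrA, htrO]
    apply Finset.sum_le_sum
    intro j _
    nlinarith [Real.sq_sqrt (hμ0 j), Real.sqrt_nonneg (μ j), hμ0 j, hμ1 j,
      Real.sqrt_le_sqrt (hμ1 j), Real.sqrt_one]

private lemma frobSq_eq_trace' {m : ℕ} (M : Matrix (Fin m) (Fin k) ℝ) :
    trace (Mᵀ * M) = ∑ i, ∑ j, (M i j)^2 := by
  rw [Finset.sum_comm]
  simp [Matrix.trace, Matrix.diag, Matrix.mul_apply, sq]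

/-- Squared Frobenius norm of a real matrix: sum of squares of entries. -/
noncomputable def frobSq {m n : ℕ} (M : Matrix (Fin m) (Fin n) ℝ) : ℝ :=
  ∑ i, ∑ j, (M i j) ^ 2

/-- For `Q, Q̂ ∈ ℝ^{d×k}` with orthonormal columns, there is an orthogonal `O ∈ ℝ^{k×k}` with
`‖Q̂ − QO‖_F² ≤ 2(k − ‖Qᵀ Q̂‖_F²)`. -/
theorem stmt7 {d k : ℕ} (Q Qh : Matrix (Fin d) (Fin k) ℝ)
    (hQ : Qᵀ * Q = 1) (hQh : Qhᵀ * Qh = 1) :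
    ∃ O : Matrix (Fin k) (Fin k) ℝ, Oᵀ * O = 1 ∧ O * Oᵀ = 1 ∧
      frobSq (Qh - Q * O) ≤ 2 * ((k : ℝ) - frobSq (Qᵀ * Qh)) := by
  classical
  simp only [frobSq]
  set A : Matrix (Fin k) (Fin k) ℝ := Qᵀ * Qh with hAdef
  set B : Matrix (Fin d) (Fin d) ℝ := 1 - Q * Qᵀ with hBdef
  have hB2 : B * B = B := by
    rw [hBdef]
    simp only [mul_sub, sub_mul, mul_one, one_mul]
    have h3 : Q * Qᵀ * (Q * Qᵀ) = Q * Qᵀ := by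
      rw [Matrix.mul_assoc, ← Matrix.mul_assoc Qᵀ Q Qᵀ, hQ, Matrix.one_mul]
    rw [h3]
    abel
  have hBt : Bᵀ = B := by
    rw [hBdef]
    simp [transpose_sub, transpose_mul, transpose_one]
  have hB : PosSemidef B := by
    have h := posSemidef_conjTranspose_mul_self B
    rwa [conjTranspose_eq_transpose_of_trivial, hBt, hB2] at h
  have hP : PosSemidef (1 - Aᵀ * A) := by
    have h := hB.conjTranspose_mul_mul_same Qh
    have heq : Qhᴴ * B * Qh = 1 - Aᵀ * A := by
      rw [conjTranspose_eq_transpose_of_trivial, hBdef, hAdef]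
      rw [transpose_mul, transpose_transpose]
      rw [Matrix.mul_sub Qhᵀ 1 (Q * Qᵀ), Matrix.mul_one, Matrix.sub_mul, hQh,
        ← Matrix.mul_assoc Qhᵀ Q Qᵀ, Matrix.mul_assoc (Qhᵀ * Q) Qᵀ Qh]
    rwa [heq] at h
  obtain ⟨O, hO1, hO2, hOtr⟩ := key A hP
  refine ⟨O, hO1, hO2, ?_⟩
  rw [← frobSq_eq_trace', ← frobSq_eq_trace']
  have e1 : (Qh - Q * O)ᵀ * (Qh - Q * O)
      = Qhᵀ * Qh - Qhᵀ * (Q * O) - (Q * O)ᵀ * Qh + (Q * O)ᵀ * (Q * O) := by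
    rw [transpose_sub, Matrix.sub_mul, Matrix.mul_sub, Matrix.mul_sub]
    abel
  have t4 : (Q * O)ᵀ * (Q * O) = 1 := by
    rw [transpose_mul, Matrix.mul_assoc Oᵀ Qᵀ (Q * O), ← Matrix.mul_assoc Qᵀ Q O, hQ,
      Matrix.one_mul, hO1]
  have t2 : Qhᵀ * (Q * O) = Aᵀ * O := by
    rw [hAdef, transpose_mul, transpose_transpose, Matrix.mul_assoc]
  have t3 : trace ((Q * O)ᵀ * Qh) = trace (Aᵀ * O) := by
    rw [← trace_transpose, transpose_mul, transpose_transpose, t2]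
  have htr1 : trace (1 : Matrix (Fin k) (Fin k) ℝ) = (k : ℝ) := by
    simp [trace_one]
  rw [e1, trace_add, trace_sub, trace_sub, hQh, t4, t2, t3, htr1]
  linarith
end

section
/- Let S ⊂ ℝ, let A ∈ ℝ^{d×d} be symmetric, and let Â = A + H be a symmetric perturbation of A. Let Q, Q̂ ∈ ℝ^{d×k} be matrices with orthonormal columns whose column spaces equal, respectively, the span of the eigenvectors of A with eigenvalues in S and the span of the eigenvectors of Â with eigenvalues in S (both of dimension k). Set δ = min{ |λ − s| : λ an eigenvalue of A with λ ∉ S, s ∈ S }, and assume δ > 0. Then there exists an orthogonal matrix O ∈ ℝ^{k×k} such that ‖Q̂ − Q O‖_F ≤ √(2k) · ‖H‖_op / δ. -/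
open Matrix

namespace DKaux

lemma star_eq_transpose {m : ℕ} (M : Matrix (Fin m) (Fin m) ℝ) : star M = Mᵀ := by
  ext i j
  simp [Matrix.star_apply]

lemma ext_of_mulVec {m n : ℕ} {M N : Matrix (Fin m) (Fin n) ℝ}
    (h : ∀ x, M *ᵥ x = N *ᵥ x) : M = N := by
  ext i j
  have := congrFun (h (Pi.single j 1)) i
  simpa [Matrix.mulVec_single] using this

lemma mulVec_eq_sum' {m n : ℕ} (M : Matrix (Fin m) (Fin n) ℝ) (v : Fin n → ℝ) :
    M *ᵥ v = ∑ j, v j • Mᵀ j := by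
  ext i
  simp [Matrix.mulVec, dotProduct, Finset.sum_apply, mul_comm]

lemma frobSq_eq_trace {m n : ℕ} (M : Matrix (Fin m) (Fin n) ℝ) :
    frobSq M = (Mᵀ * M).trace := by
  rw [frobSq, Finset.sum_comm]
  simp [Matrix.trace, Matrix.diag, Matrix.mul_apply, sq]

lemma frobSq_nonneg {m n : ℕ} (M : Matrix (Fin m) (Fin n) ℝ) : 0 ≤ frobSq M := by
  apply Finset.sum_nonneg; intro i _; apply Finset.sum_nonneg; intro j _; positivity

lemma frobSq_unitary_mul {m n : ℕ} {U : Matrix (Fin m) (Fin m) ℝ} (hU : Uᵀ * U = 1)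
    (M : Matrix (Fin m) (Fin n) ℝ) : frobSq (U * M) = frobSq M := by
  rw [frobSq_eq_trace, frobSq_eq_trace, Matrix.transpose_mul, Matrix.mul_assoc,
    ← Matrix.mul_assoc Uᵀ, hU, Matrix.one_mul]

lemma frobSq_sub {m n : ℕ} (X Y : Matrix (Fin m) (Fin n) ℝ) :
    frobSq (X - Y) = frobSq X + frobSq Y - 2 * (Xᵀ * Y).trace := by
  have ht : (Xᵀ * Y).trace = ∑ i, ∑ j, X i j * Y i j := by
    rw [Finset.sum_comm]
    simp [Matrix.trace, Matrix.diag, Matrix.mul_apply]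
  rw [ht, frobSq, frobSq, frobSq]
  rw [Finset.mul_sum, ← Finset.sum_add_distrib, ← Finset.sum_sub_distrib]
  congr 1; ext i
  rw [Finset.mul_sum, ← Finset.sum_add_distrib, ← Finset.sum_sub_distrib]
  congr 1; ext j
  simp [Matrix.sub_apply]; ring

lemma dot_mulVec_mulVec {m n : ℕ} (M : Matrix (Fin m) (Fin n) ℝ) (x y : Fin n → ℝ) :
    (M *ᵥ x) ⬝ᵥ (M *ᵥ y) = x ⬝ᵥ ((Mᵀ * M) *ᵥ y) := by
  rw [dotProduct_mulVec x, ← Matrix.vecMul_vecMul, Matrix.vecMul_transpose,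
    ← dotProduct_mulVec]

lemma hasEigenvalue_of_mulVec {n : ℕ} {M : Matrix (Fin n) (Fin n) ℝ} {v : Fin n → ℝ} {c : ℝ}
    (hv : v ≠ 0) (h : M *ᵥ v = c • v) : Module.End.HasEigenvalue (Matrix.mulVecLin M) c :=
  Module.End.hasEigenvalue_of_hasEigenvector
    ⟨Module.End.mem_eigenspace_iff.2 (by simpa using h), hv⟩

lemma eigen_package {n : ℕ} {M : Matrix (Fin n) (Fin n) ℝ} (hM : M.IsHermitian) :
    ∃ (U : Matrix (Fin n) (Fin n) ℝ) (lam : Fin n → ℝ),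
      Uᵀ * U = 1 ∧ U * Uᵀ = 1 ∧ M = U * diagonal lam * Uᵀ ∧
      (∀ j, M *ᵥ Uᵀ j = lam j • Uᵀ j) ∧ (∀ j, Uᵀ j ≠ 0) := by
  refine ⟨(hM.eigenvectorUnitary : Matrix (Fin n) (Fin n) ℝ), hM.eigenvalues, ?_, ?_, ?_, ?_, ?_⟩
  · rw [← star_eq_transpose]
    exact (Matrix.mem_unitaryGroup_iff').mp hM.eigenvectorUnitary.2
  · rw [← star_eq_transpose]
    exact (Matrix.mem_unitaryGroup_iff).mp hM.eigenvectorUnitary.2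
  · have h := hM.spectral_theorem
    simp only [Unitary.conjStarAlgAut_apply, Unitary.coe_star] at h
    rw [star_eq_transpose] at h
    exact h
  · intro j
    have hcol : ((hM.eigenvectorUnitary : Matrix (Fin n) (Fin n) ℝ)ᵀ j)
        = ⇑(hM.eigenvectorBasis j) := by
      funext i
      simp [hM.eigenvectorUnitary_apply i j]
    rw [hcol]
    exact hM.mulVec_eigenvectorBasis j
  · intro j
    have hcol : ((hM.eigenvectorUnitary : Matrix (Fin n) (Fin n) ℝ)ᵀ j)
        = ⇑(hM.eigenvectorBasis j) := by
      funext i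
      simp [hM.eigenvectorUnitary_apply i j]
    rw [hcol]
    exact fun h0 => hM.eigenvectorBasis.orthonormal.ne_zero j ((WithLp.ofLp_eq_zero 2).mp h0)

lemma proj_eq {d k : ℕ} (S : Set ℝ) {A : Matrix (Fin d) (Fin d) ℝ}
    {W : Matrix (Fin d) (Fin d) ℝ} {lam : Fin d → ℝ} (T : Finset (Fin d))
    (hWWt : W * Wᵀ = 1)
    (hcolA : ∀ j, A *ᵥ Wᵀ j = lam j • Wᵀ j)
    (hAsym : Aᵀ = A)
    (hT : ∀ i, i ∈ T ↔ lam i ∈ S)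
    {Q : Matrix (Fin d) (Fin k) ℝ} (hQ : Qᵀ * Q = 1)
    (hspan : LinearMap.range (Matrix.mulVecLin Q) =
      ⨆ μ ∈ S, Module.End.eigenspace (Matrix.mulVecLin A) μ) :
    Q * Qᵀ = W * (diagonal fun i => if i ∈ T then (1:ℝ) else 0) * Wᵀ := by
  set D : Matrix (Fin d) (Fin d) ℝ := diagonal fun i => if i ∈ T then (1:ℝ) else 0 with hD
  set P₂ : Matrix (Fin d) (Fin d) ℝ := W * D * Wᵀ with hP₂
  have hP2T : P₂ᵀ = P₂ := by
    rw [hP₂, Matrix.transpose_mul, Matrix.transpose_mul, Matrix.transpose_transpose,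
      Matrix.diagonal_transpose, Matrix.mul_assoc]
  have h1 : (Q * Qᵀ) * P₂ = P₂ := by
    apply ext_of_mulVec; intro x
    have hmem : P₂ *ᵥ x ∈ LinearMap.range (Matrix.mulVecLin Q) := by
      rw [hspan]
      have hexp : P₂ *ᵥ x = ∑ j, ((D *ᵥ (Wᵀ *ᵥ x)) j) • Wᵀ j := by
        rw [hP₂, ← Matrix.mulVec_mulVec, ← Matrix.mulVec_mulVec]
        exact mulVec_eq_sum' W _
      rw [hexp]
      apply Submodule.sum_mem
      intro j _
      by_cases hj : j ∈ T
      · apply Submodule.smul_mem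
        have hμ : lam j ∈ S := (hT j).1 hj
        have hle := le_iSup₂ (f := fun μ (_ : μ ∈ S) =>
          Module.End.eigenspace (Matrix.mulVecLin A) μ) (lam j) hμ
        exact hle (Module.End.mem_eigenspace_iff.2 (by simpa using hcolA j))
      · have hzero : (D *ᵥ (Wᵀ *ᵥ x)) j = 0 := by
          rw [hD, Matrix.mulVec_diagonal]
          simp [hj]
        rw [hzero, zero_smul]
        exact Submodule.zero_mem _
    obtain ⟨y, hy⟩ := hmem
    have hy' : Q *ᵥ y = P₂ *ᵥ x := by simpa using hy
    rw [← Matrix.mulVec_mulVec, ← hy', Matrix.mulVec_mulVec, Matrix.mul_assoc, hQ,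
      Matrix.mul_one]
  have h2 : P₂ * (Q * Qᵀ) = Q * Qᵀ := by
    have hfix : ∀ v ∈ LinearMap.range (Matrix.mulVecLin Q), P₂ *ᵥ v = v := by
      have hle : (⨆ μ ∈ S, Module.End.eigenspace (Matrix.mulVecLin A) μ) ≤
          LinearMap.eqLocus (Matrix.mulVecLin P₂) LinearMap.id := by
        refine iSup₂_le fun μ hμ => ?_
        intro w hw
        rw [Module.End.mem_eigenspace_iff] at hw
        have hAw : A *ᵥ w = μ • w := by simpa using hw
        have hc : D *ᵥ (Wᵀ *ᵥ w) = Wᵀ *ᵥ w := by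
          funext i
          rw [hD, Matrix.mulVec_diagonal]
          by_cases hi : i ∈ T
          · simp [hi]
          · have hlam : lam i ∉ S := fun h => hi ((hT i).2 h)
            have hiμ : lam i ≠ μ := fun h => hlam (h ▸ hμ)
            have hz : (Wᵀ *ᵥ w) i = 0 := by
              have e1 : lam i * (Wᵀ i ⬝ᵥ w) = μ * (Wᵀ i ⬝ᵥ w) := by
                calc lam i * (Wᵀ i ⬝ᵥ w) = (lam i • Wᵀ i) ⬝ᵥ w := by
                      rw [smul_dotProduct, smul_eq_mul]
                  _ = (A *ᵥ Wᵀ i) ⬝ᵥ w := by rw [hcolA i]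
                  _ = (Wᵀ i ᵥ* Aᵀ) ⬝ᵥ w := by rw [Matrix.vecMul_transpose]
                  _ = Wᵀ i ⬝ᵥ (A *ᵥ w) := by rw [hAsym, ← dotProduct_mulVec]
                  _ = Wᵀ i ⬝ᵥ (μ • w) := by rw [hAw]
                  _ = μ * (Wᵀ i ⬝ᵥ w) := by rw [dotProduct_smul, smul_eq_mul]
              by_contra hq
              have : (Wᵀ *ᵥ w) i = Wᵀ i ⬝ᵥ w := rfl
              rw [this] at hq
              exact hiμ (mul_right_cancel₀ hq e1)
            simp [hz]
        show (Matrix.mulVecLin P₂) w = LinearMap.id w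
        have : P₂ *ᵥ w = w := by
          calc P₂ *ᵥ w = W *ᵥ (D *ᵥ (Wᵀ *ᵥ w)) := by
                rw [hP₂, ← Matrix.mulVec_mulVec, ← Matrix.mulVec_mulVec]
            _ = W *ᵥ (Wᵀ *ᵥ w) := by rw [hc]
            _ = (W * Wᵀ) *ᵥ w := by rw [Matrix.mulVec_mulVec]
            _ = w := by rw [hWWt, Matrix.one_mulVec]
        simpa using this
      intro v hv
      rw [hspan] at hv
      have := hle hv
      simpa using this
    apply ext_of_mulVec; intro x
    rw [← Matrix.mulVec_mulVec]
    exact hfix _ ⟨Qᵀ *ᵥ x, by simp [Matrix.mulVec_mulVec]⟩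
  have h1' : P₂ * (Q * Qᵀ) = P₂ := by
    have := congrArg Matrix.transpose h1
    rw [Matrix.transpose_mul, hP2T] at this
    have hqq : (Q * Qᵀ)ᵀ = Q * Qᵀ := by
      rw [Matrix.transpose_mul, Matrix.transpose_transpose]
    rw [hqq] at this
    exact this
  rw [← h2, h1']

lemma dot_self_nonneg {n : ℕ} (v : Fin n → ℝ) : 0 ≤ v ⬝ᵥ v :=
  Finset.sum_nonneg fun i _ => mul_self_nonneg (v i)

lemma core_bound {k : ℕ} {N : Matrix (Fin k) (Fin k) ℝ} (hN : N.IsHermitian) {δ : ℝ}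
    (hδ : 0 ≤ δ)
    (hev : ∀ ν, Module.End.HasEigenvalue (Matrix.mulVecLin N) ν → δ ≤ |ν|)
    (x : Fin k → ℝ) : δ ^ 2 * (x ⬝ᵥ x) ≤ (N *ᵥ x) ⬝ᵥ (N *ᵥ x) := by
  obtain ⟨U, lam, hUtU, hUUt, hspec, hcol, hcolne⟩ := eigen_package hN
  have hev' : ∀ j, δ ≤ |lam j| := fun j =>
    hev _ (hasEigenvalue_of_mulVec (hcolne j) (hcol j))
  set c := Uᵀ *ᵥ x with hc
  have hx : x ⬝ᵥ x = c ⬝ᵥ c := by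
    rw [hc, dot_mulVec_mulVec, Matrix.transpose_transpose, hUUt, Matrix.one_mulVec]
  have hNx : N *ᵥ x = U *ᵥ (diagonal lam *ᵥ c) := by
    rw [hc, Matrix.mulVec_mulVec, Matrix.mulVec_mulVec]
    rw [← hspec]
  have hrhs : (N *ᵥ x) ⬝ᵥ (N *ᵥ x) = ∑ j, (lam j) ^ 2 * (c j) ^ 2 := by
    rw [hNx, dot_mulVec_mulVec, hUtU, Matrix.one_mulVec, dotProduct]
    refine Finset.sum_congr rfl fun j _ => ?_
    simp only [Matrix.mulVec_diagonal]
    ring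
  rw [hx, hrhs, dotProduct, Finset.mul_sum]
  apply Finset.sum_le_sum
  intro j _
  have h1 : δ ^ 2 ≤ lam j ^ 2 := by
    have h2 := hev' j
    nlinarith [abs_nonneg (lam j), sq_abs (lam j)]
  nlinarith [sq_nonneg (c j)]

lemma sandwich_mul {n : ℕ} {W X Y : Matrix (Fin n) (Fin n) ℝ} (h : Wᵀ * W = 1) :
    (W * X * Wᵀ) * (W * Y * Wᵀ) = W * (X * Y) * Wᵀ := by
  rw [Matrix.mul_assoc (W * X), Matrix.mul_assoc W Y, ← Matrix.mul_assoc Wᵀ W, h,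
    Matrix.one_mul, ← Matrix.mul_assoc, Matrix.mul_assoc W X Y]

lemma exists_orthogonal_trace {k : ℕ} (B : Matrix (Fin k) (Fin k) ℝ)
    (hB : ∀ x : Fin k → ℝ, (B *ᵥ x) ⬝ᵥ (B *ᵥ x) ≤ x ⬝ᵥ x) :
    ∃ O : Matrix (Fin k) (Fin k) ℝ, Oᵀ * O = 1 ∧ O * Oᵀ = 1 ∧
      (Bᵀ * B).trace ≤ (Oᵀ * B).trace := by
  classical
  have hBt : Bᴴ = Bᵀ := by
    have h := star_eq_transpose B
    rwa [Matrix.star_eq_conjTranspose] at h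
  have hC : (Bᵀ * B).IsHermitian := by
    have h := Matrix.isHermitian_conjTranspose_mul_self B
    rwa [hBt] at h
  obtain ⟨U, ev, hUtU, hUUt, hspec, hcol, hcolne⟩ := eigen_package hC
  have horth : ∀ j l, Uᵀ j ⬝ᵥ Uᵀ l = if j = l then (1:ℝ) else 0 := by
    intro j l
    have h := congrFun (congrFun hUtU j) l
    rw [Matrix.mul_apply, Matrix.one_apply] at h
    simpa [dotProduct, Matrix.transpose_apply] using h
  have hBU : ∀ j l, (B *ᵥ Uᵀ j) ⬝ᵥ (B *ᵥ Uᵀ l) = if j = l then ev j else 0 := by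
    intro j l
    rw [dot_mulVec_mulVec, hcol l, dotProduct_smul, smul_eq_mul, horth]
    by_cases h : j = l
    · subst h; simp
    · simp [h]
  have hev0 : ∀ j, 0 ≤ ev j := by
    intro j
    have h := hBU j j
    rw [if_pos rfl] at h
    rw [← h]
    exact dot_self_nonneg _
  have hev1 : ∀ j, ev j ≤ 1 := by
    intro j
    have h1 := hBU j j
    rw [if_pos rfl] at h1
    have h2 := hB (Uᵀ j)
    rw [h1] at h2
    have h3 := horth j j
    rw [if_pos rfl] at h3
    rwa [h3] at h2
  set σ : Fin k → ℝ := fun j => Real.sqrt (ev j) with hσ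
  have hσ0 : ∀ j, 0 ≤ σ j := fun j => Real.sqrt_nonneg _
  have hσsq : ∀ j, σ j ^ 2 = ev j := fun j => Real.sq_sqrt (hev0 j)
  set e : (Fin k → ℝ) ≃ EuclideanSpace ℝ (Fin k) := (WithLp.equiv 2 (Fin k → ℝ)).symm with he
  set vf : Fin k → EuclideanSpace ℝ (Fin k) := fun j => (σ j)⁻¹ • e (B *ᵥ Uᵀ j) with hvf
  set s : Set (Fin k) := {j | ev j ≠ 0} with hs
  have hinner : ∀ a b : Fin k → ℝ, (inner ℝ (e a) (e b) : ℝ) = a ⬝ᵥ b := by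
    intro a b
    simp [he, PiLp.inner_apply, dotProduct, RCLike.inner_apply, mul_comm]
  have hvon : Orthonormal ℝ (s.restrict vf) := by
    rw [orthonormal_iff_ite]
    rintro ⟨j, hj⟩ ⟨l, hl⟩
    have hσj : σ j ≠ 0 := by
      intro h0
      apply hj
      have := hσsq j
      rw [h0] at this
      simpa using this.symm
    have : (inner ℝ (vf j) (vf l) : ℝ) = (σ j)⁻¹ * ((σ l)⁻¹ * ((B *ᵥ Uᵀ j) ⬝ᵥ (B *ᵥ Uᵀ l))) := by
      rw [hvf]
      simp only [real_inner_smul_left, real_inner_smul_right]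
      rw [hinner]
      ring
    show inner ℝ (vf j) (vf l) = if (⟨j, hj⟩ : s) = ⟨l, hl⟩ then (1:ℝ) else 0
    rw [this, hBU]
    by_cases h : j = l
    · subst h
      rw [if_pos rfl, if_pos rfl, ← hσsq j]
      field_simp
    · rw [if_neg h, if_neg (fun hc => h (Subtype.ext_iff.mp hc))]
      simp
  obtain ⟨b, hb⟩ := hvon.exists_orthonormalBasis_extension_of_card_eq
    (by rw [finrank_euclideanSpace_fin, Fintype.card_fin])
  set U' : Matrix (Fin k) (Fin k) ℝ :=
    Matrix.of (fun i j => (WithLp.equiv 2 (Fin k → ℝ)) (b j) i) with hU'def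
  have hU' : U'ᵀ * U' = 1 := by
    ext j l
    rw [Matrix.mul_apply, Matrix.one_apply]
    have h2 := (orthonormal_iff_ite.mp b.orthonormal) j l
    simp only [PiLp.inner_apply, RCLike.inner_apply, starRingEnd_apply, star_trivial] at h2
    simpa [hU'def, Matrix.transpose_apply, Matrix.of_apply, mul_comm] using h2
  refine ⟨U' * Uᵀ, ?_, ?_, ?_⟩
  · rw [Matrix.transpose_mul, Matrix.transpose_transpose, Matrix.mul_assoc,
      ← Matrix.mul_assoc U'ᵀ, hU', Matrix.one_mul, hUUt]
  · rw [mul_eq_one_comm]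
    rw [Matrix.transpose_mul, Matrix.transpose_transpose, Matrix.mul_assoc,
      ← Matrix.mul_assoc U'ᵀ, hU', Matrix.one_mul, hUUt]
  · have htrC : (Bᵀ * B).trace = ∑ j, ev j := by
      rw [hspec, Matrix.trace_mul_comm, ← Matrix.mul_assoc, hUtU, Matrix.one_mul,
        Matrix.trace_diagonal]
    have htrO : ((U' * Uᵀ)ᵀ * B).trace = ∑ j, σ j := by
      rw [Matrix.transpose_mul, Matrix.transpose_transpose, Matrix.mul_assoc,
        Matrix.trace_mul_comm]
      have hterm : ∀ j, ((U'ᵀ * B) * U) j j = (fun l => U' l j) ⬝ᵥ (B *ᵥ Uᵀ j) := by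
        intro j
        simp only [Matrix.mul_apply, Matrix.transpose_apply, dotProduct,
          Matrix.mulVec, Finset.sum_mul, Finset.mul_sum]
        rw [Finset.sum_comm]
        exact Finset.sum_congr rfl fun l _ => Finset.sum_congr rfl fun i _ => by ring
      rw [Matrix.trace]
      calc ∑ j, ((U'ᵀ * B) * U).diag j = ∑ j, (fun l => U' l j) ⬝ᵥ (B *ᵥ Uᵀ j) :=
            Finset.sum_congr rfl fun j _ => hterm j
        _ = ∑ j, σ j := by
            refine Finset.sum_congr rfl fun j _ => ?_
            by_cases hj : ev j = 0
            · have hz : B *ᵥ Uᵀ j = 0 := by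
                have h := hBU j j
                simp only [if_pos rfl, hj] at h
                exact dotProduct_self_eq_zero.mp h
              rw [hz, dotProduct_zero, hσ]
              simp [hj]
            · have hbj := hb j hj
              have hcolid : (fun l => U' l j) = (σ j)⁻¹ • (B *ᵥ Uᵀ j) := by
                funext l
                have : U' l j = (b j) l := rfl
                rw [this, hbj]
                rfl
              rw [hcolid, smul_dotProduct]
              have h := hBU j j
              rw [if_pos rfl] at h
              rw [h, smul_eq_mul, ← hσsq j, pow_two]
              have hσj : σ j ≠ 0 := by
                intro h0
                apply hj
                rw [← hσsq j, h0]
                ring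
              rw [inv_mul_cancel_left₀ hσj]
    rw [htrC, htrO]
    apply Finset.sum_le_sum
    intro j _
    nlinarith [hσ0 j, hσsq j, hev1 j, sq_nonneg (1 - σ j)]

lemma norm_sq_eq_dot {n : ℕ} (v : Fin n → ℝ) :
    ‖(WithLp.equiv 2 (Fin n → ℝ)).symm v‖ ^ 2 = v ⬝ᵥ v := by
  rw [EuclideanSpace.norm_eq, Real.sq_sqrt (by positivity)]
  simp [dotProduct, Real.norm_eq_abs, sq_abs, pow_two]

lemma opNorm_nonneg {m n : ℕ} (H : Matrix (Fin m) (Fin n) ℝ) : 0 ≤ opNorm H :=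
  norm_nonneg _

lemma mulVec_opNorm_bound {m n : ℕ} (H : Matrix (Fin m) (Fin n) ℝ) (v : Fin n → ℝ) :
    (H *ᵥ v) ⬝ᵥ (H *ᵥ v) ≤ opNorm H ^ 2 * (v ⬝ᵥ v) := by
  have happ : (LinearMap.toContinuousLinearMap (Matrix.toEuclideanLin H))
      ((WithLp.equiv 2 (Fin n → ℝ)).symm v) = (WithLp.equiv 2 (Fin m → ℝ)).symm (H *ᵥ v) := by
    simp [Matrix.toEuclideanLin_apply]
  have hb := (LinearMap.toContinuousLinearMap (Matrix.toEuclideanLin H)).le_opNorm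
    ((WithLp.equiv 2 (Fin n → ℝ)).symm v)
  rw [happ] at hb
  have hsq := pow_le_pow_left₀ (norm_nonneg _) hb 2
  rw [norm_sq_eq_dot] at hsq
  calc (H *ᵥ v) ⬝ᵥ (H *ᵥ v) ≤ (opNorm H * ‖(WithLp.equiv 2 (Fin n → ℝ)).symm v‖) ^ 2 := hsq
    _ = opNorm H ^ 2 * ‖(WithLp.equiv 2 (Fin n → ℝ)).symm v‖ ^ 2 := by ring
    _ = opNorm H ^ 2 * (v ⬝ᵥ v) := by rw [norm_sq_eq_dot]

end DKaux

/-- Modified Davis–Kahan sin Θ lemma: if `A` is symmetric, `Â = A + H` is a symmetric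
perturbation, `Q` (resp. `Q̂`) has orthonormal columns spanning the span of eigenvectors of
`A` (resp. `Â`) with eigenvalues in `S`, and `δ > 0` is a lower bound on `|λ − s|` over
eigenvalues `λ ∉ S` of `A` and `s ∈ S`, then there is an orthogonal `O` with
`‖Q̂ − QO‖_F ≤ √(2k)·‖H‖_op/δ`. -/
theorem stmt8 {d k : ℕ} (S : Set ℝ) (A H : Matrix (Fin d) (Fin d) ℝ)
    (hA : A.IsSymm) (hH : H.IsSymm)
    (Q Qh : Matrix (Fin d) (Fin k) ℝ)
    (hQ : Qᵀ * Q = 1) (hQh : Qhᵀ * Qh = 1)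
    (hQspan : LinearMap.range (Matrix.mulVecLin Q) =
      ⨆ μ ∈ S, Module.End.eigenspace (Matrix.mulVecLin A) μ)
    (hQhspan : LinearMap.range (Matrix.mulVecLin Qh) =
      ⨆ μ ∈ S, Module.End.eigenspace (Matrix.mulVecLin (A + H)) μ)
    (δ : ℝ) (hδ : 0 < δ)
    (hgap : ∀ μ : ℝ, Module.End.HasEigenvalue (Matrix.mulVecLin A) μ → μ ∉ S →
      ∀ s ∈ S, δ ≤ |μ - s|) :
    ∃ O : Matrix (Fin k) (Fin k) ℝ, Oᵀ * O = 1 ∧ O * Oᵀ = 1 ∧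
      Real.sqrt (frobSq (Qh - Q * O)) ≤ Real.sqrt (2 * k) * opNorm H / δ := by

  classical
  have hA' : Aᵀ = A := hA
  have hH' : Hᵀ = H := hH
  have hAh' : (A + H)ᵀ = A + H := by rw [Matrix.transpose_add, hA', hH']
  have hAH : A.IsHermitian := by
    show Aᴴ = A
    rw [← Matrix.star_eq_conjTranspose, DKaux.star_eq_transpose, hA']
  have hAhH : (A + H).IsHermitian := by
    show (A + H)ᴴ = A + H
    rw [← Matrix.star_eq_conjTranspose, DKaux.star_eq_transpose, hAh']
  obtain ⟨W, lam, hWtW, hWWt, hWspec, hWcol, hWcolne⟩ := DKaux.eigen_package hAH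
  have hlamEig : ∀ i, Module.End.HasEigenvalue (Matrix.mulVecLin A) (lam i) :=
    fun i => DKaux.hasEigenvalue_of_mulVec (hWcolne i) (hWcol i)
  set T : Finset (Fin d) := Finset.univ.filter (fun i => lam i ∈ S) with hTdef
  have hTmem : ∀ i, i ∈ T ↔ lam i ∈ S := fun i => by simp [hTdef]
  have hproj : Q * Qᵀ = W * (diagonal fun i => if i ∈ T then (1:ℝ) else 0) * Wᵀ :=
    DKaux.proj_eq S T hWWt hWcol hA' hTmem hQ hQspan
  set D : Matrix (Fin d) (Fin d) ℝ := diagonal fun i => if i ∈ T then (1:ℝ) else 0 with hDdef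
  set P : Matrix (Fin d) (Fin d) ℝ := Q * Qᵀ with hPdef
  have hPsym : Pᵀ = P := by rw [hPdef, Matrix.transpose_mul, Matrix.transpose_transpose]
  have hPP : P * P = P := by
    rw [hPdef, Matrix.mul_assoc, ← Matrix.mul_assoc Qᵀ, hQ, Matrix.one_mul]
  -- the perturbed projection commutes with A + H
  obtain ⟨Wh, lamh, hWhtWh, hWhWht, hWhspec, hWhcol, hWhcolne⟩ := DKaux.eigen_package hAhH
  set Th : Finset (Fin d) := Finset.univ.filter (fun i => lamh i ∈ S) with hThdef
  have hThmem : ∀ i, i ∈ Th ↔ lamh i ∈ S := fun i => by simp [hThdef]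
  have hprojh : Qh * Qhᵀ = Wh * (diagonal fun i => if i ∈ Th then (1:ℝ) else 0) * Whᵀ :=
    DKaux.proj_eq S Th hWhWht hWhcol hAh' hThmem hQh hQhspan
  set Dh : Matrix (Fin d) (Fin d) ℝ := diagonal fun i => if i ∈ Th then (1:ℝ) else 0 with hDhdef
  have hcomm : (A + H) * (Qh * Qhᵀ) = (Qh * Qhᵀ) * (A + H) := by
    rw [hprojh, hWhspec, DKaux.sandwich_mul hWhtWh, DKaux.sandwich_mul hWhtWh]
    congr 2
    rw [hDhdef, Matrix.diagonal_mul_diagonal, Matrix.diagonal_mul_diagonal]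
    exact congrArg Matrix.diagonal (funext fun i => mul_comm _ _)
  set M : Matrix (Fin k) (Fin k) ℝ := Qhᵀ * (A + H) * Qh with hMdef
  have hMsym : Mᵀ = M := by
    rw [hMdef, Matrix.transpose_mul, Matrix.transpose_mul, Matrix.transpose_transpose, hAh',
      Matrix.mul_assoc]
  have hAQh : (A + H) * Qh = Qh * M := by
    calc (A + H) * Qh = (A + H) * (Qh * (Qhᵀ * Qh)) := by rw [hQh, Matrix.mul_one]
      _ = ((A + H) * (Qh * Qhᵀ)) * Qh := by
          rw [← Matrix.mul_assoc Qh, Matrix.mul_assoc (A+H)]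
      _ = ((Qh * Qhᵀ) * (A + H)) * Qh := by rw [hcomm]
      _ = Qh * M := by rw [hMdef, Matrix.mul_assoc, Matrix.mul_assoc, Matrix.mul_assoc]
  have hMeig : ∀ m : ℝ, Module.End.HasEigenvalue (Matrix.mulVecLin M) m → m ∈ S := by
    intro m hm
    obtain ⟨x, hx⟩ := hm.exists_hasEigenvector
    have hMx : M *ᵥ x = m • x := by simpa using Module.End.mem_eigenspace_iff.mp hx.1
    have hy0 : Qh *ᵥ x ≠ 0 := by
      intro h0
      have hdd : x ⬝ᵥ x = 0 := by
        have h1 := DKaux.dot_mulVec_mulVec Qh x x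
        rw [h0, hQh, Matrix.one_mulVec] at h1
        simpa using h1.symm
      exact hx.2 (dotProduct_self_eq_zero.mp hdd)
    have hyeig : (A + H) *ᵥ (Qh *ᵥ x) = m • (Qh *ᵥ x) := by
      rw [Matrix.mulVec_mulVec, hAQh, ← Matrix.mulVec_mulVec, hMx, Matrix.mulVec_smul]
    have hymem : Qh *ᵥ x ∈ LinearMap.range (Matrix.mulVecLin Qh) := ⟨x, by simp⟩
    by_contra hmS
    rw [hQhspan] at hymem
    have hd := (Module.End.eigenspaces_iSupIndep (Matrix.mulVecLin (A + H))) m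
    have hle : (⨆ μ ∈ S, Module.End.eigenspace (Matrix.mulVecLin (A + H)) μ) ≤
        ⨆ μ ≠ m, Module.End.eigenspace (Matrix.mulVecLin (A + H)) μ :=
      iSup₂_le fun μ hμ => le_iSup₂ (f := fun μ (_ : μ ≠ m) =>
        Module.End.eigenspace (Matrix.mulVecLin (A + H)) μ) μ (fun h => hmS (h ▸ hμ))
    have hy2 : Qh *ᵥ x ∈ Module.End.eigenspace (Matrix.mulVecLin (A + H)) m := by
      rw [Module.End.mem_eigenspace_iff]
      show Matrix.mulVecLin (A + H) (Qh *ᵥ x) = m • (Qh *ᵥ x)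
      rw [Matrix.mulVecLin_apply]
      exact hyeig
    have hbot := hd.le_bot (Submodule.mem_inf.mpr ⟨hy2, hle hymem⟩)
    exact hy0 (by simpa using hbot)
  -- Davis–Kahan core inequality
  set R : Matrix (Fin d) (Fin k) ℝ := Wᵀ * Qh with hRdef
  set G : Matrix (Fin d) (Fin k) ℝ := Wᵀ * H * Qh with hGdef
  have hWA : Wᵀ * A = diagonal lam * Wᵀ := by
    conv_lhs => rw [hWspec]
    rw [← Matrix.mul_assoc, ← Matrix.mul_assoc, hWtW, Matrix.one_mul]
  have hG : G = R * M - diagonal lam * R := by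
    have hHe : H = (A + H) - A := by abel
    rw [hGdef]
    conv_lhs => rw [hHe]
    rw [Matrix.mul_sub, Matrix.sub_mul, Matrix.mul_assoc Wᵀ (A+H) Qh, hAQh,
      ← Matrix.mul_assoc Wᵀ Qh M, hWA, Matrix.mul_assoc (diagonal lam) Wᵀ Qh, ← hRdef]
  have hrow : ∀ i, i ∉ T →
      δ ^ 2 * ((fun j => R i j) ⬝ᵥ (fun j => R i j)) ≤
        ((fun j => G i j) ⬝ᵥ (fun j => G i j)) := by
    intro i hi
    set N : Matrix (Fin k) (Fin k) ℝ := M - lam i • (1 : Matrix (Fin k) (Fin k) ℝ) with hNdef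
    have hNt : Nᵀ = N := by
      rw [hNdef, Matrix.transpose_sub, Matrix.transpose_smul, Matrix.transpose_one, hMsym]
    have hNsym : N.IsHermitian := by
      show Nᴴ = N
      rw [← Matrix.star_eq_conjTranspose, DKaux.star_eq_transpose, hNt]
    have hNev : ∀ ν : ℝ, Module.End.HasEigenvalue (Matrix.mulVecLin N) ν → δ ≤ |ν| := by
      intro ν hν
      obtain ⟨v, hv⟩ := hν.exists_hasEigenvector
      have hNv : N *ᵥ v = ν • v := by simpa using Module.End.mem_eigenspace_iff.mp hv.1
      have hMv : M *ᵥ v = (ν + lam i) • v := by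
        rw [hNdef, Matrix.sub_mulVec, Matrix.smul_mulVec, Matrix.one_mulVec] at hNv
        rw [add_smul]
        rw [sub_eq_iff_eq_add] at hNv
        rw [hNv, add_comm]
      have hmem : (ν + lam i) ∈ S := hMeig _ (DKaux.hasEigenvalue_of_mulVec hv.2 hMv)
      have hgap' := hgap (lam i) (hlamEig i) (fun hs => hi ((hTmem i).mpr hs)) _ hmem
      rw [show lam i - (ν + lam i) = -ν by ring, abs_neg] at hgap'
      exact hgap'
    have hcore := DKaux.core_bound hNsym (le_of_lt hδ) hNev (fun j => R i j)
    have hNr : N *ᵥ (fun j => R i j) = fun j => G i j := by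
      funext j
      have h1 : (N *ᵥ fun j' => R i j') j = ∑ l, (M j l - lam i * (if j = l then 1 else 0)) * R i l := by
        simp [Matrix.mulVec, dotProduct, hNdef, Matrix.sub_apply, Matrix.smul_apply,
          Matrix.one_apply, smul_eq_mul]
      have h2 : G i j = (∑ l, M j l * R i l) - lam i * R i j := by
        rw [hG]
        simp only [Matrix.sub_apply, Matrix.mul_apply, Matrix.diagonal_apply, ite_mul, zero_mul]
        rw [Finset.sum_ite_eq]
        simp only [Finset.mem_univ, if_true]
        congr 1
        refine Finset.sum_congr rfl fun l _ => ?_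
        have hMc : M l j = M j l := congrFun (congrFun hMsym j) l
        rw [hMc, mul_comm]
      rw [h1, h2]
      rw [show ∑ l, (M j l - lam i * (if j = l then (1:ℝ) else 0)) * R i l
          = (∑ l, M j l * R i l) - ∑ l, (lam i * (if j = l then (1:ℝ) else 0)) * R i l from by
        rw [← Finset.sum_sub_distrib]
        exact Finset.sum_congr rfl fun l _ => by ring]
      congr 1
      calc ∑ l, (lam i * (if j = l then (1:ℝ) else 0)) * R i l
          = ∑ l, (if j = l then lam i * R i l else 0) :=
            Finset.sum_congr rfl fun l _ => by split <;> simp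
        _ = lam i * R i j := by rw [Finset.sum_ite_eq]; simp
    rw [hNr] at hcore
    exact hcore
  -- assemble: δ² · frobSq((1-P)Qh) ≤ k · opNorm H ²
  have honeP : (1 : Matrix (Fin d) (Fin d) ℝ) - P = W * (1 - D) * Wᵀ := by
    rw [hproj, Matrix.mul_sub, Matrix.sub_mul, Matrix.mul_one, hWWt]
  have hfrobP : frobSq ((1 - P) * Qh) = frobSq ((1 - D) * R) := by
    rw [honeP, Matrix.mul_assoc (W * (1 - D)) Wᵀ Qh, ← hRdef,
      Matrix.mul_assoc W (1 - D) R, DKaux.frobSq_unitary_mul hWtW]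
  have hfrobG : frobSq G = frobSq (H * Qh) := by
    have : G = Wᵀ * (H * Qh) := by rw [hGdef, Matrix.mul_assoc]
    rw [this]
    have hWW' : (Wᵀ)ᵀ * Wᵀ = 1 := by rw [Matrix.transpose_transpose, hWWt]
    exact DKaux.frobSq_unitary_mul hWW' (H * Qh)
  have hsubD : (1 : Matrix (Fin d) (Fin d) ℝ) - D
      = diagonal (fun i' => if i' ∈ T then (0:ℝ) else 1) := by
    rw [hDdef, ← Matrix.diagonal_one, Matrix.diagonal_sub]
    exact congrArg Matrix.diagonal (by funext i'; by_cases h : i' ∈ T <;> simp [h])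
  have hDR : ∀ i j, ((1 - D) * R : Matrix (Fin d) (Fin k) ℝ) i j
      = (if i ∈ T then (0:ℝ) else 1) * R i j := by
    intro i j
    rw [hsubD, Matrix.diagonal_mul]
  have key1 : δ ^ 2 * frobSq ((1 - P) * Qh) ≤ frobSq (H * Qh) := by
    rw [hfrobP, ← hfrobG, frobSq, frobSq, Finset.mul_sum]
    apply Finset.sum_le_sum
    intro i _
    by_cases hi : i ∈ T
    · have hz : ∀ j, ((1 - D) * R : Matrix (Fin d) (Fin k) ℝ) i j = 0 := by
        intro j
        rw [hDR]
        simp [hi]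
      simp only [hz]
      have : ∀ j ∈ Finset.univ, (0:ℝ) ≤ G i j ^2 := fun j _ => sq_nonneg _
      calc δ^2 * ∑ j : Fin k, (0:ℝ)^2 = 0 := by simp
        _ ≤ ∑ j, G i j ^2 := Finset.sum_nonneg this
    · have hone : ∀ j, ((1 - D) * R : Matrix (Fin d) (Fin k) ℝ) i j = R i j := by
        intro j
        rw [hDR]
        simp [hi]
      simp only [hone]
      have h := hrow i hi
      simp only [dotProduct] at h
      calc δ^2 * ∑ j, R i j ^2 = δ^2 * ∑ j, R i j * R i j := by
            congr 1; exact Finset.sum_congr rfl fun j _ => sq (R i j)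
        _ ≤ ∑ j, G i j * G i j := h
        _ = ∑ j, G i j ^2 := Finset.sum_congr rfl fun j _ => (sq (G i j)).symm
  have key2 : frobSq (H * Qh) ≤ (k : ℝ) * opNorm H ^ 2 := by
    rw [frobSq, Finset.sum_comm]
    have hcols : ∀ j, ∑ i, (H * Qh) i j ^ 2 ≤ opNorm H ^ 2 := by
      intro j
      have hc : ∀ i, (H * Qh) i j = (H *ᵥ Qhᵀ j) i := by
        intro i
        simp [Matrix.mul_apply, Matrix.mulVec, dotProduct, Matrix.transpose_apply]
      have hb := DKaux.mulVec_opNorm_bound H (Qhᵀ j)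
      have hunit : Qhᵀ j ⬝ᵥ Qhᵀ j = 1 := by
        have h := congrFun (congrFun hQh j) j
        rw [Matrix.mul_apply, Matrix.one_apply, if_pos rfl] at h
        simpa [dotProduct, Matrix.transpose_apply] using h
      rw [hunit, mul_one] at hb
      calc ∑ i, (H * Qh) i j ^ 2 = (H *ᵥ Qhᵀ j) ⬝ᵥ (H *ᵥ Qhᵀ j) := by
            rw [dotProduct]
            exact Finset.sum_congr rfl fun i _ => by rw [hc i, sq]
        _ ≤ opNorm H ^ 2 := hb
    calc ∑ j, ∑ i, (H * Qh) i j ^ 2 ≤ ∑ _j : Fin k, opNorm H ^ 2 :=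
          Finset.sum_le_sum fun j _ => hcols j
      _ = (k : ℝ) * opNorm H ^ 2 := by simp [mul_comm]
  -- the orthogonal matrix
  set B : Matrix (Fin k) (Fin k) ℝ := Qᵀ * Qh with hBdef
  have hBcontr : ∀ x : Fin k → ℝ, (B *ᵥ x) ⬝ᵥ (B *ᵥ x) ≤ x ⬝ᵥ x := by
    intro x
    set u := Qh *ᵥ x with hu
    have h1 : (B *ᵥ x) ⬝ᵥ (B *ᵥ x) = u ⬝ᵥ (P *ᵥ u) := by
      rw [hBdef, ← Matrix.mulVec_mulVec, DKaux.dot_mulVec_mulVec, Matrix.transpose_transpose, ← hPdef]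
    have h2 : x ⬝ᵥ x = u ⬝ᵥ u := by
      have h := DKaux.dot_mulVec_mulVec Qh x x
      rw [hQh, Matrix.one_mulVec] at h
      exact h.symm ▸ (by rw [← h])
    have h3 : 0 ≤ u ⬝ᵥ u - u ⬝ᵥ (P *ᵥ u) := by
      have hq : ((1 - P) *ᵥ u) ⬝ᵥ ((1 - P) *ᵥ u) = u ⬝ᵥ u - u ⬝ᵥ (P *ᵥ u) := by
        rw [DKaux.dot_mulVec_mulVec]
        have ht : (1 - P)ᵀ * (1 - P) = 1 - P := by
          rw [Matrix.transpose_sub, Matrix.transpose_one, hPsym, Matrix.sub_mul,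
            Matrix.one_mul, Matrix.mul_sub, Matrix.mul_one, hPP, sub_self, sub_zero]
        rw [ht, Matrix.sub_mulVec, Matrix.one_mulVec, dotProduct_sub]
      rw [← hq]
      exact DKaux.dot_self_nonneg _
    rw [h1, h2]
    linarith
  obtain ⟨O, hO1, hO2, hOtr⟩ := DKaux.exists_orthogonal_trace B hBcontr
  refine ⟨O, hO1, hO2, ?_⟩
  -- trace identities
  have key5 : frobSq ((1 - P) * Qh) = (k : ℝ) - (Bᵀ * B).trace := by
    rw [DKaux.frobSq_eq_trace]
    have hBt' : Qhᵀ * Q = Bᵀ := by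
      rw [hBdef, Matrix.transpose_mul, Matrix.transpose_transpose]
    have h1 : ((1 - P) * Qh)ᵀ * ((1 - P) * Qh) = 1 - Bᵀ * B := by
      have hsub : (1 - P) * Qh = Qh - Q * B := by
        rw [Matrix.sub_mul, Matrix.one_mul, hPdef, hBdef, Matrix.mul_assoc]
      rw [hsub, Matrix.transpose_sub, Matrix.transpose_mul, Matrix.sub_mul, Matrix.mul_sub,
        Matrix.mul_sub, hQh, ← Matrix.mul_assoc Qhᵀ Q B, hBt']
      rw [Matrix.mul_assoc Bᵀ Qᵀ Qh, ← hBdef, Matrix.mul_assoc Bᵀ Qᵀ (Q * B),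
        ← Matrix.mul_assoc Qᵀ Q B, hQ, Matrix.one_mul, sub_self, sub_zero]
    rw [h1, Matrix.trace_sub, Matrix.trace_one]
    simp
  have key4 : frobSq (Qh - Q * O) = 2 * (k:ℝ) - 2 * (Oᵀ * B).trace := by
    rw [DKaux.frobSq_sub]
    have hf1 : frobSq Qh = (k : ℝ) := by
      rw [DKaux.frobSq_eq_trace, hQh, Matrix.trace_one]
      simp
    have hf2 : frobSq (Q * O) = (k : ℝ) := by
      rw [DKaux.frobSq_eq_trace, Matrix.transpose_mul, Matrix.mul_assoc,
        ← Matrix.mul_assoc Qᵀ, hQ, Matrix.one_mul, hO1, Matrix.trace_one]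
      simp
    have hf3 : (Qhᵀ * (Q * O)).trace = (Oᵀ * B).trace := by
      rw [← Matrix.trace_transpose, Matrix.transpose_mul, Matrix.transpose_mul,
        Matrix.transpose_transpose, hBdef, Matrix.mul_assoc]
    rw [hf1, hf2, hf3]
    ring
  -- final numeric assembly
  have hδ2 : (0:ℝ) < δ ^ 2 := by positivity
  have hstep : frobSq ((1 - P) * Qh) ≤ (k : ℝ) * opNorm H ^ 2 / δ ^ 2 := by
    rw [le_div_iff₀ hδ2]
    calc frobSq ((1 - P) * Qh) * δ ^ 2 = δ ^ 2 * frobSq ((1 - P) * Qh) := by ring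
      _ ≤ frobSq (H * Qh) := key1
      _ ≤ (k : ℝ) * opNorm H ^ 2 := key2
  have hfr : frobSq (Qh - Q * O) ≤ 2 * ((k : ℝ) * opNorm H ^ 2) / δ ^ 2 := by
    have h1 : frobSq (Qh - Q * O) ≤ 2 * frobSq ((1 - P) * Qh) := by
      rw [key4, key5]
      have := hOtr
      linarith
    calc frobSq (Qh - Q * O) ≤ 2 * frobSq ((1 - P) * Qh) := h1
      _ ≤ 2 * ((k : ℝ) * opNorm H ^ 2 / δ ^ 2) := by linarith [hstep]
      _ = 2 * ((k : ℝ) * opNorm H ^ 2) / δ ^ 2 := by ring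
  have hrhs0 : 0 ≤ Real.sqrt (2 * k) * opNorm H / δ := by
    apply div_nonneg _ (le_of_lt hδ)
    exact mul_nonneg (Real.sqrt_nonneg _) (DKaux.opNorm_nonneg H)
  have heq : 2 * ((k : ℝ) * opNorm H ^ 2) / δ ^ 2 = (Real.sqrt (2 * k) * opNorm H / δ) ^ 2 := by
    have h2k : Real.sqrt (2 * k) ^ 2 = 2 * (k:ℝ) := Real.sq_sqrt (by positivity)
    rw [div_pow, mul_pow, h2k]
    ring
  calc Real.sqrt (frobSq (Qh - Q * O)) ≤ Real.sqrt ((Real.sqrt (2 * k) * opNorm H / δ) ^ 2) := by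
        apply Real.sqrt_le_sqrt
        rw [← heq]
        exact hfr
    _ = Real.sqrt (2 * k) * opNorm H / δ := Real.sqrt_sq hrhs0
end

section
/- Let u and v be nonzero vectors in a real inner product space. Then ‖ u/‖u‖ − v/‖v‖ ‖² ≤ 2·( |‖v‖ − ‖u‖|² + ‖u − v‖² ) / ‖v‖² ≤ 4·‖u − v‖² / ‖v‖². -/
/-- Row-normalization perturbation bound in a real inner product space: for nonzero `u, v`,
`‖u/‖u‖ − v/‖v‖‖² ≤ 2(|‖v‖ − ‖u‖|² + ‖u − v‖²)/‖v‖² ≤ 4‖u − v‖²/‖v‖²`. -/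
theorem stmt10 {E : Type*} [NormedAddCommGroup E] [InnerProductSpace ℝ E]
    (u v : E) (hu : u ≠ 0) (hv : v ≠ 0) :
    ‖‖u‖⁻¹ • u - ‖v‖⁻¹ • v‖ ^ 2 ≤ 2 * (|‖v‖ - ‖u‖| ^ 2 + ‖u - v‖ ^ 2) / ‖v‖ ^ 2 ∧
    2 * (|‖v‖ - ‖u‖| ^ 2 + ‖u - v‖ ^ 2) / ‖v‖ ^ 2 ≤ 4 * ‖u - v‖ ^ 2 / ‖v‖ ^ 2 := by
  have hun : (0:ℝ) < ‖u‖ := norm_pos_iff.mpr hu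
  have hvn : (0:ℝ) < ‖v‖ := norm_pos_iff.mpr hv
  constructor
  · have hdecomp : ‖u‖⁻¹ • u - ‖v‖⁻¹ • v
        = ‖v‖⁻¹ • (u - v) + (‖u‖⁻¹ - ‖v‖⁻¹) • u := by
      rw [smul_sub, sub_smul]
      abel
    have h1 : ‖‖u‖⁻¹ • u - ‖v‖⁻¹ • v‖ ≤ ‖u - v‖ / ‖v‖ + |‖v‖ - ‖u‖| / ‖v‖ := by
      rw [hdecomp]
      refine le_trans (norm_add_le _ _) ?_
      have ha : ‖‖v‖⁻¹ • (u - v)‖ = ‖u - v‖ / ‖v‖ := by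
        rw [norm_smul, norm_inv, norm_norm]; ring
      have hb : ‖(‖u‖⁻¹ - ‖v‖⁻¹) • u‖ = |‖v‖ - ‖u‖| / ‖v‖ := by
        rw [norm_smul, Real.norm_eq_abs]
        have : ‖u‖⁻¹ - ‖v‖⁻¹ = (‖v‖ - ‖u‖) / (‖u‖ * ‖v‖) := by
          field_simp
        rw [this, abs_div, abs_of_pos (by positivity : (0:ℝ) < ‖u‖ * ‖v‖)]
        field_simp
      rw [ha, hb]
    have hnn : (0:ℝ) ≤ ‖‖u‖⁻¹ • u - ‖v‖⁻¹ • v‖ := norm_nonneg _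
    rw [← add_div] at h1
    have h2 : ‖‖u‖⁻¹ • u - ‖v‖⁻¹ • v‖ ^ 2 ≤ ((‖u - v‖ + |‖v‖ - ‖u‖|) / ‖v‖) ^ 2 := by
      exact pow_le_pow_left₀ hnn h1 2
    refine h2.trans ?_
    rw [div_pow, div_le_div_iff₀ (by positivity) (by positivity)]
    nlinarith [sq_nonneg (‖u - v‖ - |‖v‖ - ‖u‖|), sq_nonneg ‖v‖]
  · have h : |‖v‖ - ‖u‖| ≤ ‖u - v‖ := by
      rw [abs_sub_comm]
      exact abs_norm_sub_norm_le u v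
    have h2 : |‖v‖ - ‖u‖| ^ 2 ≤ ‖u - v‖ ^ 2 := pow_le_pow_left₀ (abs_nonneg _) h 2
    apply div_le_div_of_nonneg_right ?_ (by positivity) |>.trans_eq rfl
    linarith
end

section
/- Let 𝒰 ∈ ℝ^{d×k} be a matrix each of whose rows is a standard basis vector of ℝ^k (so that any two rows of 𝒰 are either equal or at Euclidean distance √2 from each other). Let C ∈ ℝ^{d×k} be arbitrary and define Σ = { i ∈ {1,…,d} : ‖C_{i,·} − 𝒰_{i,·}‖₂ ≥ 1/√2 }. Then for all indices i, j ∉ Σ with C_{i,·} = C_{j,·}, one has 𝒰_{i,·} = 𝒰_{j,·}. -/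
open Matrix

lemma stmt13_norm_eq {k : ℕ} (x y : EuclideanSpace ℝ (Fin k)) :
    ‖x - y‖ = Real.sqrt (∑ m, (x m - y m) ^ 2) := by
  rw [EuclideanSpace.norm_eq]
  congr 1
  apply Finset.sum_congr rfl
  intro m _
  simp [Real.norm_eq_abs, sq_abs]

/-- Correctly clustered points: if every row of `𝒰` is a standard basis vector of `ℝ^k`,
`C` is arbitrary, and `Σ = {i : ‖Cᵢ − 𝒰ᵢ‖₂ ≥ 1/√2}`, then any two indices outside `Σ`
with equal rows of `C` have equal rows of `𝒰`. -/
theorem stmt13 {d k : ℕ} (U C : Matrix (Fin d) (Fin k) ℝ)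
    (hU : ∀ i, ∃ l : Fin k, ∀ j, U i j = if j = l then 1 else 0) :
    ∀ i j : Fin d,
      i ∉ {i : Fin d | 1 / Real.sqrt 2 ≤ Real.sqrt (∑ m, (C i m - U i m) ^ 2)} →
      j ∉ {i : Fin d | 1 / Real.sqrt 2 ≤ Real.sqrt (∑ m, (C i m - U i m) ^ 2)} →
      (∀ m, C i m = C j m) → (∀ m, U i m = U j m) := by
  intro i j hi hj hC
  simp only [Set.mem_setOf_eq, not_le] at hi hj
  obtain ⟨li, hli⟩ := hU i
  obtain ⟨lj, hlj⟩ := hU j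
  by_cases h : li = lj
  · intro m; rw [hli, hlj, h]
  · exfalso
    set u : EuclideanSpace ℝ (Fin k) := WithLp.toLp 2 (fun m => U i m) with hu
    set v : EuclideanSpace ℝ (Fin k) := WithLp.toLp 2 (fun m => U j m) with hv
    set f : EuclideanSpace ℝ (Fin k) := WithLp.toLp 2 (fun m => C i m) with hf
    have h2pos : (0:ℝ) < Real.sqrt 2 := Real.sqrt_pos.mpr (by norm_num)
    have key : ‖u - v‖ = Real.sqrt 2 := by
      rw [stmt13_norm_eq]
      congr 1
      have hterm : ∀ m, (u m - v m) ^ 2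
          = (if m = li then (1:ℝ) else 0) + (if m = lj then 1 else 0) := by
        intro m
        simp only [hu, hv, hli, hlj]
        by_cases h1 : m = li <;> by_cases h2 : m = lj <;> simp_all <;> ring
      rw [Finset.sum_congr rfl (fun m _ => hterm m), Finset.sum_add_distrib]
      simp; norm_num
    have huf : ‖u - f‖ < 1 / Real.sqrt 2 := by
      rw [stmt13_norm_eq]
      have : ∑ m, (u m - f m) ^ 2 = ∑ m, (C i m - U i m) ^ 2 := by
        apply Finset.sum_congr rfl; intro m _; simp only [hu, hf]; ring
      rw [this]; exact hi
    have hfv : ‖f - v‖ < 1 / Real.sqrt 2 := by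
      rw [stmt13_norm_eq]
      have : ∑ m, (f m - v m) ^ 2 = ∑ m, (C j m - U j m) ^ 2 := by
        apply Finset.sum_congr rfl; intro m _; simp [hf, hv, hC m]
      rw [this]; exact hj
    have htri : ‖u - v‖ ≤ ‖u - f‖ + ‖f - v‖ := by
      calc ‖u - v‖ = ‖(u - f) + (f - v)‖ := by rw [sub_add_sub_cancel]
      _ ≤ ‖u - f‖ + ‖f - v‖ := norm_add_le _ _
    have hsum : 1 / Real.sqrt 2 + 1 / Real.sqrt 2 = Real.sqrt 2 := by
      rw [← add_div, eq_comm, eq_div_iff (ne_of_gt h2pos),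
        Real.mul_self_sqrt (by norm_num)]; norm_num
    linarith
end

section
/- Let 𝒰̂ ∈ ℝ^{d×k}, let 𝒰 ∈ ℝ^{d×k} be a matrix with at most k distinct rows, and let C* be a minimizer of C ↦ ‖𝒰̂ − C‖_F² over the set ℳ(d,k) of all matrices in ℝ^{d×k} having at most k distinct rows. Then the number of indices i ∈ {1,…,d} with ‖C*_{i,·} − 𝒰_{i,·}‖₂ ≥ 1/√2 is at most 8·‖𝒰̂ − 𝒰‖_F². -/
open Matrix

/-- `M ∈ ℳ(d,k)`: the matrix `M ∈ ℝ^{d×k}` has at most `k` distinct rows. -/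
def hasAtMostKDistinctRows {d k : ℕ} (M : Matrix (Fin d) (Fin k) ℝ) : Prop :=
  ∃ (c : Fin d → Fin k) (r : Fin k → Fin k → ℝ), ∀ i j, M i j = r (c i) j

/-- View a matrix as a vector in Euclidean space. -/
noncomputable def toE {m n : ℕ} (M : Matrix (Fin m) (Fin n) ℝ) :
    EuclideanSpace ℝ (Fin m × Fin n) :=
  WithLp.toLp 2 (fun p => M p.1 p.2)

lemma frobSq_eq {m n : ℕ} (M : Matrix (Fin m) (Fin n) ℝ) :
    frobSq M = ‖toE M‖ ^ 2 := by
  rw [EuclideanSpace.norm_eq, Real.sq_sqrt (by positivity)]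
  rw [frobSq, Fintype.sum_prod_type]
  simp [toE, sq_abs]

lemma frobSq_nonneg {m n : ℕ} (M : Matrix (Fin m) (Fin n) ℝ) : 0 ≤ frobSq M := by
  rw [frobSq_eq]; positivity

/-- Counting bound for the k-means step: if `𝒰` has at most `k` distinct rows and `C*`
minimizes `C ↦ ‖𝒰̂ − C‖_F²` over `ℳ(d,k)`, then the number of indices with
`‖C*ᵢ − 𝒰ᵢ‖₂ ≥ 1/√2` is at most `8‖𝒰̂ − 𝒰‖_F²`. -/
theorem stmt14 {d k : ℕ} (Uhat U Cstar : Matrix (Fin d) (Fin k) ℝ)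
    (hU : hasAtMostKDistinctRows U)
    (hCmem : hasAtMostKDistinctRows Cstar)
    (hCmin : ∀ C : Matrix (Fin d) (Fin k) ℝ, hasAtMostKDistinctRows C →
      frobSq (Uhat - Cstar) ≤ frobSq (Uhat - C)) :
    (({i : Fin d | 1 / Real.sqrt 2 ≤
        Real.sqrt (∑ m, (Cstar i m - U i m) ^ 2)}.ncard : ℝ))
      ≤ 8 * frobSq (Uhat - U) := by
  -- Step 1: frobSq (Cstar - U) ≤ 4 * frobSq (Uhat - U)
  have hmin := hCmin U hU
  have htri : ‖toE (Cstar - U)‖ ≤ ‖toE (Uhat - Cstar)‖ + ‖toE (Uhat - U)‖ := by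
    have : toE (Cstar - U) = -(toE (Uhat - Cstar)) + toE (Uhat - U) := by
      ext p; simp [toE, Matrix.sub_apply]
    rw [this]
    calc ‖-(toE (Uhat - Cstar)) + toE (Uhat - U)‖
        ≤ ‖-(toE (Uhat - Cstar))‖ + ‖toE (Uhat - U)‖ := norm_add_le _ _
      _ = _ := by rw [norm_neg]
  have hns : ‖toE (Uhat - Cstar)‖ ≤ ‖toE (Uhat - U)‖ := by
    have h1 := frobSq_eq (Uhat - Cstar)
    have h2 := frobSq_eq (Uhat - U)
    nlinarith [norm_nonneg (toE (Uhat - Cstar)), norm_nonneg (toE (Uhat - U))]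
  have key : frobSq (Cstar - U) ≤ 4 * frobSq (Uhat - U) := by
    rw [frobSq_eq, frobSq_eq]
    nlinarith [norm_nonneg (toE (Cstar - U)), norm_nonneg (toE (Uhat - U))]
  -- Step 2: count bound
  set T : Finset (Fin d) := Finset.univ.filter
    (fun i => 1 / Real.sqrt 2 ≤ Real.sqrt (∑ m, (Cstar i m - U i m) ^ 2)) with hT
  have hset : {i : Fin d | 1 / Real.sqrt 2 ≤
      Real.sqrt (∑ m, (Cstar i m - U i m) ^ 2)} = (T : Set (Fin d)) := by
    ext i; simp [hT]
  rw [hset, Set.ncard_coe_finset]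
  have hhalf : ∀ i ∈ T, (1 : ℝ) / 2 ≤ ∑ m, (Cstar i m - U i m) ^ 2 := by
    intro i hi
    rw [hT, Finset.mem_filter] at hi
    have h := hi.2
    have h2 : (0:ℝ) < Real.sqrt 2 := by positivity
    have hs : (1 / Real.sqrt 2) ^ 2 ≤ Real.sqrt (∑ m, (Cstar i m - U i m) ^ 2) ^ 2 :=
      pow_le_pow_left₀ (by positivity) h 2
    rw [Real.sq_sqrt (by positivity)] at hs
    calc (1:ℝ)/2 = (1 / Real.sqrt 2) ^ 2 := by
          rw [div_pow, one_pow, Real.sq_sqrt (by norm_num)]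
      _ ≤ _ := hs
  have hsum : (T.card : ℝ) * (1/2) ≤ frobSq (Cstar - U) := by
    have h1 : (T.card : ℝ) * (1/2) ≤ ∑ i ∈ T, ∑ m, (Cstar i m - U i m) ^ 2 := by
      have := Finset.sum_le_sum hhalf
      simpa using this
    refine h1.trans ?_
    rw [frobSq]
    refine Finset.sum_le_sum_of_subset_of_nonneg (Finset.subset_univ T) ?_ |>.trans ?_
    · intro i _ _; positivity
    · apply le_of_eq; apply Finset.sum_congr rfl; intro i _
      simp [Matrix.sub_apply]
  linarith
end
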